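/- Let A be a real d×n matrix, b ∈ ℝ^d, P a real m×n matrix, f : ℝ → ℝ convex and three times differentiable, and let ε > 0, R > 0 and weights w ∈ ℝ^m be given, with resistances r_i = R^{−2}(f''(w_i) + ε·Φ(w)/m). If there exists x* ∈ ℝ^n with A x* = b and ‖P x*‖_∞ ≤ R, then Ψ(r) = inf{ ∑_{i=1}^m r_i (PΔ)_i² : AΔ = b } ≤ (1+ε)·Φ(w). -/
import Mathlib


open scoped BigOperators

lemma monotone_hasDerivAt_nonneg {g : ℝ → ℝ} (hg : Monotone g) {x c : ℝ}
    (h : HasDerivAt g c x) : 0 ≤ c := by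
  have ht : Filter.Tendsto (slope g x) (nhdsWithin x {x}ᶜ) (nhds c) :=
    hasDerivAt_iff_tendsto_slope.mp h
  refine ge_of_tendsto ht ?_
  filter_upwards [self_mem_nhdsWithin] with y hy
  have hne : y ≠ x := by simpa using hy
  rw [slope_def_field, div_eq_mul_inv]
  rcases lt_or_gt_of_ne hne with hlt | hlt
  · have h1 : g y - g x ≤ 0 := by linarith [hg hlt.le]
    have h2 : (y - x)⁻¹ ≤ 0 := inv_nonpos.mpr (by linarith)
    nlinarith [mul_nonneg (neg_nonneg.mpr h1) (neg_nonneg.mpr h2)]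
  · exact mul_nonneg (by linarith [hg hlt.le]) (inv_nonneg.mpr (by linarith))

/-- Lemma 2.4 (first inequality): Ψ(r) ≤ (1+ε)·Φ(w). -/
theorem psi_le_one_add_eps_mul_phi
    (d n m : ℕ) (A : Matrix (Fin d) (Fin n) ℝ) (b : Fin d → ℝ)
    (P : Matrix (Fin m) (Fin n) ℝ) (f : ℝ → ℝ)
    (hconv : ConvexOn ℝ Set.univ f)
    (hf1 : Differentiable ℝ f) (hf2 : Differentiable ℝ (deriv f))
    (hf3 : Differentiable ℝ (deriv (deriv f)))
    (ε R : ℝ) (hε : 0 < ε) (hR : 0 < R)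
    (w r : Fin m → ℝ)
    (hr : ∀ i, r i = 1 / R ^ 2 *
      (deriv (deriv f) (w i) + ε * (∑ j, deriv (deriv f) (w j)) / m))
    (xstar : Fin n → ℝ) (hxA : A.mulVec xstar = b)
    (hxR : ‖P.mulVec xstar‖ ≤ R) :
    sInf {v : ℝ | ∃ Δ : Fin n → ℝ, A.mulVec Δ = b ∧
        v = ∑ i, r i * (P.mulVec Δ) i ^ 2} ≤
      (1 + ε) * ∑ i, deriv (deriv f) (w i) := by
  -- second derivative is nonnegative
  have hmono : Monotone (deriv f) := by
    have := hconv.monotoneOn_deriv (fun x _ => (hf1 x))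
    exact monotoneOn_univ.mp this
  have hf'' : ∀ x : ℝ, 0 ≤ deriv (deriv f) x := fun x =>
    monotone_hasDerivAt_nonneg hmono (hf2 x).hasDerivAt
  set Φ : ℝ := ∑ j, deriv (deriv f) (w j) with hΦ
  have hΦ0 : 0 ≤ Φ := Finset.sum_nonneg fun j _ => hf'' _
  have hrnn : ∀ i, 0 ≤ r i := by
    intro i
    rw [hr i]
    have h1 : 0 ≤ ε * Φ / m :=
      div_nonneg (mul_nonneg hε.le hΦ0) (Nat.cast_nonneg m)
    have h2 : (0:ℝ) ≤ 1 / R ^ 2 := by positivity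
    exact mul_nonneg h2 (add_nonneg (hf'' _) h1)
  -- the value at Δ = xstar
  have hmem : (∑ i, r i * (P.mulVec xstar) i ^ 2) ∈
      {v : ℝ | ∃ Δ : Fin n → ℝ, A.mulVec Δ = b ∧
        v = ∑ i, r i * (P.mulVec Δ) i ^ 2} :=
    ⟨xstar, hxA, rfl⟩
  have hbdd : BddBelow {v : ℝ | ∃ Δ : Fin n → ℝ, A.mulVec Δ = b ∧
      v = ∑ i, r i * (P.mulVec Δ) i ^ 2} := by
    refine ⟨0, fun v hv => ?_⟩
    obtain ⟨Δ, _, rfl⟩ := hv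
    exact Finset.sum_nonneg fun i _ => mul_nonneg (hrnn i) (sq_nonneg _)
  refine csInf_le_of_le hbdd hmem ?_
  -- bound each coordinate
  have hcoord : ∀ i, (P.mulVec xstar) i ^ 2 ≤ R ^ 2 := by
    intro i
    have h1 : |(P.mulVec xstar) i| ≤ R :=
      le_trans (norm_le_pi_norm (P.mulVec xstar) i) hxR
    have := abs_le.mp h1
    nlinarith [this.1, this.2]
  calc ∑ i, r i * (P.mulVec xstar) i ^ 2
      ≤ ∑ i : Fin m, r i * R ^ 2 :=
        Finset.sum_le_sum fun i _ =>
          mul_le_mul_of_nonneg_left (hcoord i) (hrnn i)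
    _ = ∑ i : Fin m, (deriv (deriv f) (w i) + ε * Φ / m) := by
        refine Finset.sum_congr rfl fun i _ => ?_
        rw [hr i]
        field_simp
    _ = Φ + (m : ℝ) * (ε * Φ / m) := by
        rw [Finset.sum_add_distrib, Finset.sum_const, Finset.card_fin,
          nsmul_eq_mul, hΦ]
    _ ≤ (1 + ε) * Φ := by
        rcases Nat.eq_zero_or_pos m with hm | hm
        · subst hm
          simp [hΦ]
        · have hm' : (m : ℝ) ≠ 0 := Nat.cast_ne_zero.mpr hm.ne'
          have : (m : ℝ) * (ε * Φ / m) = ε * Φ := by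
            field_simp
          rw [this]; ring_nf; exact le_refl _
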